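/- Let (X,ρ,W) be a hyperbolic space, C ⊆ X nonempty convex, (M,d) a metric space with the AFPP for nonexpansive mappings, δ : M → C nonexpansive, and T : (C × M)_∞ → (C × M)_∞ nonexpansive. Suppose sup_{u∈M} r_C(T_u) < ∞ where r_C(T_u) = inf{ρ(x, T_u(x)) : x ∈ C}, and suppose there is φ : (0,∞) → (0,∞) such that for each ε > 0 and v ∈ M there is x* ∈ C with ρ(δ(v), x*) ≤ φ(ε) and ρ(x*, T_v(x*)) ≤ sup_{u∈M} r_C(T_u) + ε. Then r_H(T) ≤ sup_{u∈M} r_C(T_u), where H = (C × M)_∞ and r_H(T) = inf{d_∞(h, T(h)) : h ∈ H}. -/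

import Mathlib

open Metric Set

/-- Krasnoselski-Mann iteration: x₀ := x, x_{n+1} := W(x_n, T(x_n), λ_n). -/
def KM {X : Type*} (W : X → X → ℝ → X) (T : X → X) (lam : ℕ → ℝ) (x : X) : ℕ → X
  | 0 => x
  | n + 1 => W (KM W T lam x n) (T (KM W T lam x n)) (lam n)

/-- M has the approximate fixed point property for nonexpansive mappings. -/
def AFPP (M : Type*) [MetricSpace M] : Prop :=
  ∀ S : M → M, (∀ u v : M, dist (S u) (S v) ≤ dist u v) →
    sInf {r : ℝ | ∃ u : M, r = dist u (S u)} = 0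

/-- Auxiliary iteration: x₀ := δ u, x_{k+1} := W (δ u) (P₁ (T (x_k, u))) t. -/
def iterW {X M : Type*} (W : X → X → ℝ → X) (T : X × M → X × M) (δ : M → X) (t : ℝ)
    (u : M) : ℕ → X
  | 0 => δ u
  | k + 1 => W (δ u) ((T (iterW W T δ t u k, u)).1) t

/-- r_H(T) ≤ sup_{u∈M} r_C(T_u). -/
theorem rH_le_sup_rC {X M : Type*} [MetricSpace X] [MetricSpace M] [Nonempty M]
    (W : X → X → ℝ → X)
    (hW1 : ∀ x y z : X, ∀ l ∈ Set.Icc (0:ℝ) 1,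
      dist z (W x y l) ≤ (1 - l) * dist z x + l * dist z y)
    (hW2 : ∀ x y : X, ∀ l ∈ Set.Icc (0:ℝ) 1, ∀ l' ∈ Set.Icc (0:ℝ) 1,
      dist (W x y l) (W x y l') = |l - l'| * dist x y)
    (hW3 : ∀ x y : X, ∀ l ∈ Set.Icc (0:ℝ) 1, W x y l = W y x (1 - l))
    (hW4 : ∀ x y z w : X, ∀ l ∈ Set.Icc (0:ℝ) 1,
      dist (W x z l) (W y w l) ≤ (1 - l) * dist x y + l * dist z w)
    (C : Set X) (hC : C.Nonempty)
    (hconv : ∀ x ∈ C, ∀ y ∈ C, ∀ l ∈ Set.Icc (0:ℝ) 1, W x y l ∈ C)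
    (hM : AFPP M)
    (δ : M → X) (hδC : ∀ u, δ u ∈ C)
    (hδne : ∀ u v : M, dist (δ u) (δ v) ≤ dist u v)
    (T : X × M → X × M)
    (hT1 : ∀ x ∈ C, ∀ u : M, (T (x, u)).1 ∈ C)
    (hTne : ∀ p q : X × M, p.1 ∈ C → q.1 ∈ C → dist (T p) (T q) ≤ dist p q)
    (rC : M → ℝ)
    (hrC : ∀ u, rC u = sInf {r : ℝ | ∃ x ∈ C, r = dist x (T (x, u)).1})
    (hbdd : BddAbove (Set.range rC))
    (φ : ℝ → ℝ) (hφpos : ∀ ε > (0:ℝ), 0 < φ ε)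
    (hφ : ∀ ε > (0:ℝ), ∀ v : M, ∃ xstar ∈ C,
      dist (δ v) xstar ≤ φ ε ∧ dist xstar (T (xstar, v)).1 ≤ sSup (Set.range rC) + ε) :
    sInf {r : ℝ | ∃ x ∈ C, ∃ u : M, r = dist (x, u) (T (x, u))} ≤ sSup (Set.range rC) := by
  classical
  set rs := sSup (Set.range rC) with hrs
  obtain ⟨c0, hc0⟩ := hC
  have hrC_nonneg : ∀ u, 0 ≤ rC u := by
    intro u
    rw [hrC u]
    refine le_csInf ⟨dist c0 (T (c0, u)).1, c0, hc0, rfl⟩ ?_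
    rintro r ⟨x, hx, rfl⟩; exact dist_nonneg
  have hrs_nonneg : 0 ≤ rs :=
    le_trans (hrC_nonneg (Classical.arbitrary M)) (le_csSup hbdd ⟨_, rfl⟩)
  have hfst : ∀ p q : X × M, dist p.1 q.1 ≤ dist p q := fun p q => by
    rw [Prod.dist_eq]; exact le_max_left _ _
  have hsnd : ∀ p q : X × M, dist p.2 q.2 ≤ dist p q := fun p q => by
    rw [Prod.dist_eq]; exact le_max_right _ _
  have hSet_bdd : BddBelow {r : ℝ | ∃ x ∈ C, ∃ u : M, r = dist (x, u) (T (x, u))} :=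
    ⟨0, by rintro r ⟨x, hx, u, rfl⟩; exact dist_nonneg⟩
  have hW_one : ∀ x y : X, W x y 1 = y := by
    intro x y
    have h := hW1 x y y 1 ⟨zero_le_one, le_rfl⟩
    simp only [sub_self, zero_mul, dist_self, mul_zero, one_mul, zero_add, add_zero] at h
    exact (dist_le_zero.mp h).symm
  have key : ∀ ε > (0:ℝ),
      sInf {r : ℝ | ∃ x ∈ C, ∃ u : M, r = dist (x, u) (T (x, u))} ≤ rs + 4 * ε := by
    intro ε hε
    set φε := φ ε with hφεdef
    have hφεpos : 0 < φε := hφpos ε hε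
    set s := min (1/2 : ℝ) (ε / (2 * φε)) with hsdef
    have hs_pos : 0 < s := lt_min (by norm_num) (div_pos hε (by positivity))
    have hs_le : s ≤ 1/2 := min_le_left _ _
    set t := 1 - s with htdef
    have ht0 : 0 ≤ t := by simp only [htdef]; linarith
    have ht1 : t < 1 := by simp only [htdef]; linarith
    have htmem : t ∈ Set.Icc (0:ℝ) 1 := ⟨ht0, ht1.le⟩
    have hst : 1 - t = s := by simp [htdef]
    have hsφ : s * φε ≤ ε / 2 := by
      have h1 : s ≤ ε / (2 * φε) := min_le_right _ _
      have := mul_le_mul_of_nonneg_right h1 hφεpos.le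
      calc s * φε ≤ ε / (2 * φε) * φε := this
        _ = ε / 2 := by field_simp
    set B := 2 * φε + rs + ε with hBdef
    have hBpos : 0 < B := by simp only [hBdef]; linarith
    obtain ⟨n, hn⟩ := exists_pow_lt_of_lt_one (div_pos hε hBpos) ht1
    have htnB : t ^ n * B < ε := (lt_div_iff₀ hBpos).1 hn
    have htn0 : 0 ≤ t ^ n := pow_nonneg ht0 n
    -- basic properties of the iteration
    have hmem : ∀ u k, iterW W T δ t u k ∈ C := by
      intro u k
      induction k with
      | zero => exact hδC u
      | succ k ih => exact hconv _ (hδC u) _ (hT1 _ ih u) t htmem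
    have hxne : ∀ u v k, dist (iterW W T δ t u k) (iterW W T δ t v k) ≤ dist u v := by
      intro u v k
      induction k with
      | zero => exact hδne u v
      | succ k ih =>
        have h1 : dist (T (iterW W T δ t u k, u)).1 (T (iterW W T δ t v k, v)).1 ≤ dist u v := by
          refine (hfst _ _).trans ((hTne _ _ (hmem u k) (hmem v k)).trans ?_)
          rw [Prod.dist_eq]; exact max_le ih le_rfl
        have h2 := hW4 (δ u) (δ v) ((T (iterW W T δ t u k, u)).1)
          ((T (iterW W T δ t v k, v)).1) t htmem
        have h3 : dist (δ u) (δ v) ≤ dist u v := hδne u v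
        calc dist (iterW W T δ t u (k+1)) (iterW W T δ t v (k+1))
            ≤ (1 - t) * dist (δ u) (δ v) + t * dist (T (iterW W T δ t u k, u)).1
              (T (iterW W T δ t v k, v)).1 := h2
          _ ≤ (1 - t) * dist u v + t * dist u v := by
              have hh1 := mul_le_mul_of_nonneg_left h3 (by linarith : (0:ℝ) ≤ 1 - t)
              have hh2 := mul_le_mul_of_nonneg_left h1 ht0
              linarith
          _ = dist u v := by ring
    -- the iteration is a t-contraction in x (for fixed u)
    have hdec : ∀ u k, dist (iterW W T δ t u (k+1)) (iterW W T δ t u (k+2))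
        ≤ t * dist (iterW W T δ t u k) (iterW W T δ t u (k+1)) := by
      intro u k
      have h1 : dist (T (iterW W T δ t u k, u)).1 (T (iterW W T δ t u (k+1), u)).1
          ≤ dist (iterW W T δ t u k) (iterW W T δ t u (k+1)) := by
        refine (hfst _ _).trans ((hTne _ _ (hmem u k) (hmem u (k+1))).trans ?_)
        rw [Prod.dist_eq, dist_self]; exact max_le le_rfl dist_nonneg
      have h2 := hW4 (δ u) (δ u) ((T (iterW W T δ t u k, u)).1)
        ((T (iterW W T δ t u (k+1), u)).1) t htmem
      rw [dist_self] at h2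
      calc dist (iterW W T δ t u (k+1)) (iterW W T δ t u (k+2))
          ≤ (1 - t) * 0 + t * dist (T (iterW W T δ t u k, u)).1
            (T (iterW W T δ t u (k+1), u)).1 := h2
        _ ≤ t * dist (iterW W T δ t u k) (iterW W T δ t u (k+1)) := by
            have := mul_le_mul_of_nonneg_left h1 ht0
            linarith
    have hgeo : ∀ u k, dist (iterW W T δ t u k) (iterW W T δ t u (k+1))
        ≤ t ^ k * dist (iterW W T δ t u 0) (iterW W T δ t u 1) := by
      intro u k
      induction k with
      | zero => simp
      | succ k ih =>
        calc dist (iterW W T δ t u (k+1)) (iterW W T δ t u (k+2))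
            ≤ t * dist (iterW W T δ t u k) (iterW W T δ t u (k+1)) := hdec u k
          _ ≤ t * (t ^ k * dist (iterW W T δ t u 0) (iterW W T δ t u 1)) :=
              mul_le_mul_of_nonneg_left ih ht0
          _ = t ^ (k+1) * dist (iterW W T δ t u 0) (iterW W T δ t u 1) := by ring
    -- uniform smallness of successive step at stage n, and displacement bound
    have hdisp : ∀ u, dist (iterW W T δ t u n) (T (iterW W T δ t u n, u)).1 ≤ rs + 4 * ε := by
      intro u
      obtain ⟨xst, hxstC, hxst1, hxst2⟩ := hφ ε hε u
      -- first step bound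
      have hd0 : dist (iterW W T δ t u 0) (iterW W T δ t u 1) ≤ B := by
        have h1 : dist (δ u) (iterW W T δ t u 1)
            ≤ (1 - t) * dist (δ u) (δ u) + t * dist (δ u) (T (δ u, u)).1 :=
          hW1 (δ u) ((T (δ u, u)).1) (δ u) t htmem
        rw [dist_self, mul_zero, zero_add] at h1
        have h2 : dist (T (xst, u)).1 (T (δ u, u)).1 ≤ dist xst (δ u) := by
          refine (hfst _ _).trans ((hTne _ _ hxstC (hδC u)).trans ?_)
          rw [Prod.dist_eq, dist_self]; exact max_le le_rfl dist_nonneg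
        have h3 : dist (δ u) (T (δ u, u)).1
            ≤ dist (δ u) xst + dist xst (T (xst, u)).1 + dist (T (xst, u)).1 (T (δ u, u)).1 :=
          dist_triangle4 _ _ _ _
        have h4 : dist xst (δ u) = dist (δ u) xst := dist_comm _ _
        have h5 : dist (δ u) (T (δ u, u)).1 ≤ B := by
          simp only [hBdef]; rw [h4] at h2; linarith
        have h6 : t * dist (δ u) (T (δ u, u)).1 ≤ 1 * B := by
          have := mul_le_mul_of_nonneg_left h5 ht0
          have h7 : t * B ≤ 1 * B := mul_le_mul_of_nonneg_right ht1.le hBpos.le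
          linarith
        show dist (δ u) (iterW W T δ t u 1) ≤ B
        linarith
      set z := iterW W T δ t u n with hzdef
      set Fz := iterW W T δ t u (n+1) with hFzdef
      have hη : dist z Fz ≤ ε := by
        have := hgeo u n
        have h1 : t ^ n * dist (iterW W T δ t u 0) (iterW W T δ t u 1) ≤ t ^ n * B :=
          mul_le_mul_of_nonneg_left hd0 htn0
        calc dist z Fz ≤ t ^ n * dist (iterW W T δ t u 0) (iterW W T δ t u 1) := this
          _ ≤ t ^ n * B := h1
          _ ≤ ε := htnB.le
      set a := (T (z, u)).1 with hadef
      set astar := (T (xst, u)).1 with hastardef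
      have hFz_eq : Fz = W (δ u) a t := rfl
      have hza_nonexp : dist a astar ≤ dist z xst := by
        refine (hfst _ _).trans ((hTne _ _ (hmem u n) hxstC).trans ?_)
        rw [Prod.dist_eq, dist_self]; exact max_le le_rfl dist_nonneg
      -- (i) (1 - t) * dist z xst ≤ η + s * φε + t * (rs + ε)
      have hi : s * dist z xst ≤ dist z Fz + s * φε + t * (rs + ε) := by
        have h1 : dist Fz (W (δ u) astar t)
            ≤ (1 - t) * dist (δ u) (δ u) + t * dist a astar := by
          rw [hFz_eq]; exact hW4 (δ u) (δ u) a astar t htmem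
        rw [dist_self, mul_zero, zero_add] at h1
        have h2 : dist xst (W (δ u) astar t)
            ≤ (1 - t) * dist xst (δ u) + t * dist xst astar :=
          hW1 (δ u) astar xst t htmem
        have h3 : dist xst (δ u) ≤ φε := by rw [dist_comm]; exact hxst1
        have h4 : dist xst astar ≤ rs + ε := hxst2
        have h5 : dist z xst ≤ dist z Fz + dist Fz (W (δ u) astar t) + dist (W (δ u) astar t) xst :=
          dist_triangle4 _ _ _ _
        rw [dist_comm (W (δ u) astar t) xst] at h5
        have h6 : t * dist a astar ≤ t * dist z xst :=
          mul_le_mul_of_nonneg_left hza_nonexp ht0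
        have h7 : (1 - t) * dist xst (δ u) ≤ (1 - t) * φε := by
          have : (0:ℝ) ≤ 1 - t := by linarith
          exact mul_le_mul_of_nonneg_left h3 this
        have h8 : t * dist xst astar ≤ t * (rs + ε) := mul_le_mul_of_nonneg_left h4 ht0
        have hs' : 1 - t = s := hst
        nlinarith [dist_nonneg (α := X) (x := z) (y := xst)]
      -- (ii) displacement bound
      have hW2' : dist Fz a = (1 - t) * dist (δ u) a := by
        have h1 := hW2 (δ u) a t htmem 1 ⟨zero_le_one, le_rfl⟩
        rw [hW_one] at h1
        rw [hFz_eq, h1, abs_of_nonpos (by linarith : t - 1 ≤ 0)]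
        ring
      have h9 : dist (δ u) a ≤ φε + (rs + ε) + dist xst z := by
        have h10 : dist astar a ≤ dist xst z := by rw [dist_comm astar a, dist_comm xst z]
                                                   exact hza_nonexp
        have h11 : dist (δ u) a ≤ dist (δ u) xst + dist xst astar + dist astar a :=
          dist_triangle4 _ _ _ _
        linarith [hxst1, hxst2]
      have h12 : dist z a ≤ dist z Fz + dist Fz a := dist_triangle _ _ _
      rw [hW2', hst] at h12
      have h13 : s * dist (δ u) a ≤ s * (φε + (rs + ε) + dist xst z) :=
        mul_le_mul_of_nonneg_left h9 hs_pos.le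
      have h14 : dist xst z = dist z xst := dist_comm _ _
      -- combine: dist z a ≤ 2η + 2 s φε + (s + t)(rs+ε) = 2η + 2sφε + rs + ε
      have hfinal : dist z a ≤ 2 * dist z Fz + 2 * (s * φε) + (s + t) * (rs + ε) := by
        nlinarith
      have hst1 : s + t = 1 := by simp [htdef]
      rw [hst1, one_mul] at hfinal
      calc dist z a ≤ 2 * dist z Fz + 2 * (s * φε) + (rs + ε) := hfinal
        _ ≤ 2 * ε + 2 * (ε / 2) + (rs + ε) := by linarith
        _ = rs + 4 * ε := by ring
    -- apply AFPP to the nonexpansive map u ↦ P₂(T(x_n(u), u))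
    set Su : M → M := fun u => (T (iterW W T δ t u n, u)).2 with hSudef
    have hSne : ∀ u v, dist (Su u) (Su v) ≤ dist u v := by
      intro u v
      refine (hsnd _ _).trans ((hTne _ _ (hmem u n) (hmem v n)).trans ?_)
      rw [Prod.dist_eq]; exact max_le (hxne u v n) le_rfl
    have h0 := hM Su hSne
    have hne : {r : ℝ | ∃ u, r = dist u (Su u)}.Nonempty :=
      ⟨_, Classical.arbitrary M, rfl⟩
    have hlt : sInf {r : ℝ | ∃ u, r = dist u (Su u)} < ε := by rw [h0]; exact hε
    obtain ⟨r0, hr0mem, hr0⟩ := exists_lt_of_csInf_lt hne hlt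
    obtain ⟨u0, rfl⟩ := hr0mem
    refine csInf_le_of_le hSet_bdd ⟨iterW W T δ t u0 n, hmem u0 n, u0, rfl⟩ ?_
    rw [Prod.dist_eq]
    refine max_le (hdisp u0) ?_
    have : dist u0 (Su u0) < ε := hr0
    have hεle : ε ≤ rs + 4 * ε := by linarith
    exact le_trans this.le hεle
  refine le_of_forall_pos_le_add fun ε hε => ?_
  have h := key (ε / 4) (by linarith)
  calc sInf {r : ℝ | ∃ x ∈ C, ∃ u : M, r = dist (x, u) (T (x, u))}
      ≤ rs + 4 * (ε / 4) := h
    _ = rs + ε := by ring
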